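/- Let (Y_1,X_1),…,(Y_n,X_n) be i.i.d. with law P on {0,1}×ℝ^p, let g be a classifier and α ∈ (0,1) a trimming level. Then R_α(g) ≤ E[R_{n,α}(g)], i.e. the empirical trimmed classification error is, in expectation, at least the trimmed classification error. -/

import Mathlib

open MeasureTheory ProbabilityTheory ENNReal

noncomputable section

/-- The classification error `R(g) = P({(y,x) : g(x) ≠ y})`. -/
def classErr {p : ℕ} (P : Measure (Bool × (Fin p → ℝ))) (g : (Fin p → ℝ) → Bool) : ℝ :=
  (P {z | g z.2 ≠ z.1}).toReal

/-- The set of `α`-trimmed versions of a measure `μ`. -/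
def trimmedSet {Ω : Type*} [MeasurableSpace Ω] (μ : Measure Ω) (α : ℝ) :
    Set (Measure Ω) :=
  {ν | IsProbabilityMeasure ν ∧ ν ≪ μ ∧
    ∀ᵐ z ∂μ, ν.rnDeriv μ z ≤ ENNReal.ofReal (1 / (1 - α))}

/-- The trimmed classification error `R_α(g) = inf_{Q ∈ 𝓡_α(P)} Q(g(x) ≠ y)`. -/
def trimmedErr {p : ℕ} (P : Measure (Bool × (Fin p → ℝ))) (α : ℝ)
    (g : (Fin p → ℝ) → Bool) : ℝ :=
  sInf ((fun Q => (Q {z | g z.2 ≠ z.1}).toReal) '' trimmedSet P α)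

/-- Empirical classification error `R_n(g) = (1/n) Σ_i 1{g(X_i) ≠ Y_i}`. -/
def empErr {p : ℕ} (n : ℕ) (ξ : Fin n → Bool × (Fin p → ℝ))
    (g : (Fin p → ℝ) → Bool) : ℝ :=
  (1 / n) * ∑ i, if g (ξ i).2 ≠ (ξ i).1 then (1 : ℝ) else 0

/-- Auxiliary: a two-valued density gives an element of the trimmed set. -/
lemma twoValued_mem_trimmedSet {Ω : Type*} [MeasurableSpace Ω] (P : Measure Ω)
    [IsFiniteMeasure P] {A : Set Ω} (hA : MeasurableSet A) (ca cb : ℝ≥0∞) {α : ℝ}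
    (hca : ca ≤ ENNReal.ofReal (1 / (1 - α))) (hcb : cb ≤ ENNReal.ofReal (1 / (1 - α)))
    (hsum : ca * P A + cb * P Aᶜ = 1) :
    P.withDensity (fun z => A.indicator (fun _ => ca) z + Aᶜ.indicator (fun _ => cb) z)
        ∈ trimmedSet P α ∧
      P.withDensity (fun z => A.indicator (fun _ => ca) z + Aᶜ.indicator (fun _ => cb) z)
        A = ca * P A := by
  set f : Ω → ℝ≥0∞ :=
    fun z => A.indicator (fun _ => ca) z + Aᶜ.indicator (fun _ => cb) z with hf
  have hfval : ∀ z, (z ∈ A → f z = ca) ∧ (z ∉ A → f z = cb) := by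
    intro z
    constructor
    · intro h
      simp only [hf, Set.indicator_of_mem h,
        Set.indicator_of_notMem (by simpa using h : z ∉ Aᶜ), add_zero]
    · intro h
      simp only [hf, Set.indicator_of_notMem h,
        Set.indicator_of_mem (by simpa using h : z ∈ Aᶜ), zero_add]
  have hfm : Measurable f :=
    (measurable_const.indicator hA).add (measurable_const.indicator hA.compl)
  have hlintA : ∫⁻ z in A, f z ∂P = ca * P A := by
    rw [setLIntegral_congr_fun hA (fun z hz => (hfval z).1 hz),
      setLIntegral_const]
  have hlintAc : ∫⁻ z in Aᶜ, f z ∂P = cb * P Aᶜ := by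
    rw [setLIntegral_congr_fun hA.compl
      (fun z (hz : z ∈ Aᶜ) => (hfval z).2 (by simpa using hz)),
      setLIntegral_const]
  have htot : ∫⁻ z, f z ∂P = 1 := by
    rw [← lintegral_add_compl f hA, hlintA, hlintAc, hsum]
  refine ⟨⟨⟨?_⟩, withDensity_absolutelyContinuous P f, ?_⟩, ?_⟩
  · rw [withDensity_apply _ MeasurableSet.univ, Measure.restrict_univ, htot]
  · filter_upwards [Measure.rnDeriv_withDensity P hfm] with z hz
    rw [hz]
    by_cases h : z ∈ A
    · rw [(hfval z).1 h]; exact hca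
    · rw [(hfval z).2 h]; exact hcb
  · rw [withDensity_apply _ hA, hlintA]

/-- For an i.i.d. sample with law `P`, the expected empirical trimmed error
`E[R_{n,α}(g)] = E[(R_n(g) − α)_+/(1−α)]` is at least the trimmed error `R_α(g)`. -/
theorem trimmedErr_le_expectation {p : ℕ}
    (P : Measure (Bool × (Fin p → ℝ))) [IsProbabilityMeasure P]
    {α : ℝ} (hα : α ∈ Set.Ioo (0 : ℝ) 1)
    {g : (Fin p → ℝ) → Bool} (hg : Measurable g)
    {Ω : Type*} [MeasurableSpace Ω] (μ : Measure Ω) [IsProbabilityMeasure μ]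
    {n : ℕ} (hn : 0 < n) (ξ : Fin n → Ω → Bool × (Fin p → ℝ))
    (hmeas : ∀ i, Measurable (ξ i))
    (hindep : iIndepFun ξ μ)
    (hlaw : ∀ i, μ.map (ξ i) = P) :
    trimmedErr P α g ≤
      ∫ ω, max (empErr n (fun i => ξ i ω) g - α) 0 / (1 - α) ∂μ := by
  obtain ⟨hα0, hα1⟩ := hα
  have hαlt : (0 : ℝ) < 1 - α := by linarith
  set A : Set (Bool × (Fin p → ℝ)) := {z | g z.2 ≠ z.1} with hA_def
  have hA : MeasurableSet A := by
    have : A = (fun z : Bool × (Fin p → ℝ) => (g z.2, z.1)) ⁻¹'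
        {q : Bool × Bool | q.1 ≠ q.2} := rfl
    rw [this]
    exact ((hg.comp measurable_snd).prodMk measurable_fst) (Set.toFinite _).measurableSet
  set rr : ℝ := (P A).toReal with hrr
  have hPA_ne : P A ≠ ⊤ := measure_ne_top _ _
  have hPA : P A = ENNReal.ofReal rr := (ENNReal.ofReal_toReal hPA_ne).symm
  have hrr0 : (0 : ℝ) ≤ rr := ENNReal.toReal_nonneg
  have hrr1 : rr ≤ 1 := by
    have h1 : P A ≤ 1 := prob_le_one
    have := ENNReal.toReal_mono (by norm_num) h1
    simpa using this
  have hPAc : P Aᶜ = ENNReal.ofReal (1 - rr) := by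
    rw [measure_compl hA hPA_ne, measure_univ, hPA,
      ENNReal.ofReal_sub _ hrr0, ENNReal.ofReal_one]
  have hBdd : BddBelow ((fun Q => (Q {z | g z.2 ≠ z.1}).toReal) '' trimmedSet P α) := by
    refine ⟨0, fun x hx => ?_⟩
    obtain ⟨Q, _, rfl⟩ := hx
    exact ENNReal.toReal_nonneg
  -- Step 1: trimmedErr ≤ (rr - α)₊ / (1 - α)
  have key1 : trimmedErr P α g ≤ max (rr - α) 0 / (1 - α) := by
    by_cases hcase : rr ≤ α
    · -- trimming can remove all the error
      have hr1 : (0 : ℝ) < 1 - rr := by linarith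
      obtain ⟨hmem, hval⟩ := twoValued_mem_trimmedSet P hA 0 (ENNReal.ofReal (1 / (1 - rr)))
        (α := α) (zero_le)
        (by
          apply ENNReal.ofReal_le_ofReal
          apply one_div_le_one_div_of_le hαlt
          linarith)
        (by
          rw [zero_mul, zero_add, hPAc, ← ENNReal.ofReal_mul (by positivity)]
          rw [show (1 / (1 - rr)) * (1 - rr) = 1 by field_simp]
          exact ENNReal.ofReal_one)
      have hQval : ((P.withDensity (fun z => A.indicator (fun _ => (0 : ℝ≥0∞)) z +
          Aᶜ.indicator (fun _ => ENNReal.ofReal (1 / (1 - rr))) z)) A).toReal = 0 := by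
        rw [hval, zero_mul]; simp
      have hle : trimmedErr P α g ≤ 0 := by
        rw [trimmedErr]
        have : (0 : ℝ) ∈ (fun Q => (Q {z | g z.2 ≠ z.1}).toReal) '' trimmedSet P α :=
          ⟨_, hmem, hQval⟩
        exact csInf_le hBdd this
      have : max (rr - α) 0 = 0 := max_eq_right (by linarith)
      rw [this]
      simpa using hle
    · push_neg at hcase
      have hrrpos : (0 : ℝ) < rr := lt_trans hα0 hcase
      set ca : ℝ≥0∞ := ENNReal.ofReal ((rr - α) / (rr * (1 - α))) with hca_def
      set cb : ℝ≥0∞ := ENNReal.ofReal (1 / (1 - α)) with hcb_def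
      have hnn1 : (0:ℝ) ≤ (rr - α) / (rr * (1 - α)) :=
        div_nonneg (by linarith) (by positivity)
      have hnn2 : (0:ℝ) ≤ 1 / (1 - α) := by positivity
      obtain ⟨hmem, hval⟩ := twoValued_mem_trimmedSet P hA ca cb (α := α)
        (by
          apply ENNReal.ofReal_le_ofReal
          rw [div_le_div_iff₀ (by positivity) hαlt]
          nlinarith)
        le_rfl
        (by
          rw [hPA, hPAc, ← ENNReal.ofReal_mul hnn1,
            ← ENNReal.ofReal_mul hnn2,
            ← ENNReal.ofReal_add (mul_nonneg hnn1 hrr0)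
              (mul_nonneg hnn2 (by linarith))]
          rw [show (rr - α) / (rr * (1 - α)) * rr + 1 / (1 - α) * (1 - rr) = 1 by
            field_simp; ring]
          exact ENNReal.ofReal_one)
      have hQval : ((P.withDensity (fun z => A.indicator (fun _ => ca) z +
          Aᶜ.indicator (fun _ => cb) z)) A).toReal = (rr - α) / (1 - α) := by
        rw [hval, hPA, ← ENNReal.ofReal_mul hnn1,
          show (rr - α) / (rr * (1 - α)) * rr = (rr - α) / (1 - α) by field_simp,
          ENNReal.toReal_ofReal (div_nonneg (by linarith) hαlt.le)]
      have hle : trimmedErr P α g ≤ (rr - α) / (1 - α) := by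
        rw [trimmedErr]
        exact csInf_le hBdd ⟨_, hmem, hQval⟩
      rw [max_eq_left (by linarith)]
      exact hle
  -- Step 2: (rr - α)₊ / (1 - α) ≤ expectation
  set e : Ω → ℝ := fun ω => empErr n (fun i => ξ i ω) g with he_def
  have heq : ∀ i : Fin n, (fun ω => if g (ξ i ω).2 ≠ (ξ i ω).1 then (1 : ℝ) else 0) =
      (ξ i ⁻¹' A).indicator (fun _ => (1 : ℝ)) := by
    intro i
    ext ω
    by_cases h : g (ξ i ω).2 ≠ (ξ i ω).1
    · rw [if_pos h, Set.indicator_of_mem (by exact h)]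
    · rw [if_neg h, Set.indicator_of_notMem (by exact h)]
  have hint_i : ∀ i : Fin n,
      Integrable (fun ω => if g (ξ i ω).2 ≠ (ξ i ω).1 then (1 : ℝ) else 0) μ := by
    intro i
    rw [heq i]
    exact (integrable_const 1).indicator ((hmeas i) hA)
  have hval_i : ∀ i : Fin n,
      ∫ ω, (if g (ξ i ω).2 ≠ (ξ i ω).1 then (1 : ℝ) else 0) ∂μ = rr := by
    intro i
    rw [heq i, integral_indicator_const (1 : ℝ) ((hmeas i) hA), smul_eq_mul, mul_one, measureReal_def,
      ← Measure.map_apply (hmeas i) hA, hlaw i]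
  have he_int : Integrable e μ := by
    have : e = fun ω => (1 / (n : ℝ)) *
        ∑ i, if g (ξ i ω).2 ≠ (ξ i ω).1 then (1 : ℝ) else 0 := rfl
    rw [this]
    exact (integrable_finset_sum _ fun i _ => hint_i i).const_mul _
  have he_val : ∫ ω, e ω ∂μ = rr := by
    have : ∫ ω, e ω ∂μ = (1 / (n : ℝ)) *
        ∑ i : Fin n, ∫ ω, (if g (ξ i ω).2 ≠ (ξ i ω).1 then (1 : ℝ) else 0) ∂μ := by
      rw [show (fun ω => e ω) = fun ω => (1 / (n : ℝ)) *
          ∑ i, if g (ξ i ω).2 ≠ (ξ i ω).1 then (1 : ℝ) else 0 from rfl,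
        integral_const_mul, integral_finset_sum _ fun i _ => hint_i i]
    rw [this]
    simp only [hval_i, Finset.sum_const, Finset.card_univ, Fintype.card_fin, nsmul_eq_mul]
    have hn' : (n : ℝ) ≠ 0 := Nat.cast_ne_zero.mpr hn.ne'
    field_simp
  have hpos_int : Integrable (fun ω => max (e ω - α) 0) μ :=
    (he_int.sub (integrable_const α)).pos_part
  have h1 : rr - α ≤ ∫ ω, max (e ω - α) 0 ∂μ := by
    have hsub : ∫ ω, (e ω - α) ∂μ = rr - α := by
      rw [integral_sub he_int (integrable_const α), he_val, integral_const]
      simp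
    calc rr - α = ∫ ω, (e ω - α) ∂μ := hsub.symm
      _ ≤ ∫ ω, max (e ω - α) 0 ∂μ :=
        integral_mono (he_int.sub (integrable_const α)) hpos_int fun ω => le_max_left _ _
  have h2 : (0 : ℝ) ≤ ∫ ω, max (e ω - α) 0 ∂μ :=
    integral_nonneg fun ω => le_max_right _ _
  have key2 : max (rr - α) 0 / (1 - α) ≤ ∫ ω, max (e ω - α) 0 / (1 - α) ∂μ := by
    rw [integral_div]
    gcongr; exact max_le h1 h2
  exact key1.trans key2

end
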